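/- Let F be a field and C, D ⊆ F^n be nonzero linear subspaces. Then dim(C*D) ≥ dim C + dim D − dim St(C*D), where C*D is the span of all coordinatewise products c*d with c ∈ C and d ∈ D, and St(E) = {x ∈ F^n : x*E ⊆ E}. -/

import Mathlib

open Submodule

/-- The (Schur / coordinatewise) product of two subspaces of `Fin n → K`. -/
def schurMul {K : Type*} [CommRing K] {n : ℕ} (C D : Submodule K (Fin n → K)) :
    Submodule K (Fin n → K) :=
  Submodule.span K {x | ∃ c ∈ C, ∃ d ∈ D, x = c * d}

/-- `schurPow C k` is the `(k+1)`-st Schur power `C^⟨k+1⟩`; so `schurPow C 0 = C^⟨1⟩ = C`. -/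
def schurPow {K : Type*} [CommRing K] {n : ℕ} (C : Submodule K (Fin n → K)) :
    ℕ → Submodule K (Fin n → K)
  | 0 => C
  | k + 1 => schurMul (schurPow C k) C

/-- The stabiliser `St(E) = {x : x * E ⊆ E}` of a subspace, itself a subspace. -/
def stab {K : Type*} [CommRing K] {n : ℕ} (E : Submodule K (Fin n → K)) :
    Submodule K (Fin n → K) where
  carrier := {x | ∀ e ∈ E, x * e ∈ E}
  add_mem' := fun {a b} ha hb e he => by simpa [add_mul] using E.add_mem (ha e he) (hb e he)
  zero_mem' := fun e he => by simp
  smul_mem' := fun c {x} hx e he => by simpa [smul_mul_assoc] using E.smul_mem c (hx e he)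

/-- Support of a subspace of `Fin n → K`. -/
def suppS {K : Type*} [CommRing K] {n : ℕ} (C : Submodule K (Fin n → K)) : Set (Fin n) :=
  {i | ∃ v ∈ C, v i ≠ 0}

/-- Characteristic vector of a finite set. -/
def charVec (R : Type*) [Zero R] [One R] {n : ℕ} (A : Finset (Fin n)) : Fin n → R :=
  fun i => if i ∈ A then 1 else 0

/-- `𝓕` is `k`-wise `ℓ`-divisible: every intersection of `k` (not necessarily distinct)
members of `𝓕` has cardinality divisible by `ℓ`. -/
def kWiseDiv (n k ℓ : ℕ) (𝓕 : Finset (Finset (Fin n))) : Prop :=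
  ∀ A : Fin k → Finset (Fin n), (∀ i, A i ∈ 𝓕) → ℓ ∣ (Finset.univ.inf A).card

/-- Support of a set family. -/
def famSupp {n : ℕ} (ℱ : Set (Finset (Fin n))) : Set (Fin n) :=
  ⋃ B ∈ ℱ, (B : Set (Fin n))

/-- `A` is an atom of the family `ℱ`: a nonempty subset of the support such that every
member of `ℱ` contains `A` or is disjoint from it, maximal with this property. -/
def IsAtomOf {n : ℕ} (ℱ : Set (Finset (Fin n))) (A : Finset (Fin n)) : Prop :=
  A.Nonempty ∧ (A : Set (Fin n)) ⊆ famSupp ℱ ∧ (∀ B ∈ ℱ, A ⊆ B ∨ Disjoint A B) ∧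
    ∀ A' : Finset (Fin n), A ⊆ A' → (A' : Set (Fin n)) ⊆ famSupp ℱ →
      (∀ B ∈ ℱ, A' ⊆ B ∨ Disjoint A' B) → A' = A

/-- The family `ℱ^r` of all `r`-fold intersections of members of `ℱ`. -/
def interFam {n : ℕ} (ℱ : Set (Finset (Fin n))) (r : ℕ) : Set (Finset (Fin n)) :=
  {S | ∃ f : Fin r → Finset (Fin n), (∀ i, f i ∈ ℱ) ∧ S = Finset.univ.inf f}

/-- The linear map sending `v` to its restriction (indicator) on a coordinate set `S`. -/
noncomputable def indicatorMapL {K : Type*} [CommRing K] {n : ℕ} (S : Set (Fin n)) :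
    (Fin n → K) →ₗ[K] (Fin n → K) where
  toFun v := S.indicator v
  map_add' a b := by
    funext i; by_cases h : i ∈ S <;> simp [Set.indicator_apply, h]
  map_smul' c a := by
    funext i; by_cases h : i ∈ S <;> simp [Set.indicator_apply, h]

/-- Restriction (projection) of a subspace `V` to the coordinates in `S`. -/
noncomputable def restrTo {K : Type*} [CommRing K] {n : ℕ} (S : Set (Fin n))
    (V : Submodule K (Fin n → K)) : Submodule K (Fin n → K) :=
  V.map (indicatorMapL S)


open Submodule Module
open scoped Classical

section Infra
variable {K : Type*} [Field K]

/-- Schur product span for a general index type. -/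
def mulSpan {ι : Type} (C D : Submodule K (ι → K)) : Submodule K (ι → K) :=
  Submodule.span K {x | ∃ c ∈ C, ∃ d ∈ D, x = c * d}

/-- Stabilizer for a general index type. -/
def stabS {ι : Type} (E : Submodule K (ι → K)) : Submodule K (ι → K) where
  carrier := {x | ∀ e ∈ E, x * e ∈ E}
  add_mem' := fun {a b} ha hb e he => by simpa [add_mul] using E.add_mem (ha e he) (hb e he)
  zero_mem' := fun e he => by simp
  smul_mem' := fun c {x} hx e he => by simpa [smul_mul_assoc] using E.smul_mem c (hx e he)

variable {ι : Type}

lemma mem_stabS {E : Submodule K (ι → K)} {x : ι → K} :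
    x ∈ stabS E ↔ ∀ e ∈ E, x * e ∈ E := Iff.rfl

lemma one_mem_stabS (E : Submodule K (ι → K)) : (1 : ι → K) ∈ stabS E := by
  intro e he; simpa using he

lemma mul_mem_stabS {E : Submodule K (ι → K)} {x y : ι → K}
    (hx : x ∈ stabS E) (hy : y ∈ stabS E) : x * y ∈ stabS E := by
  intro e he
  have : x * (y * e) ∈ E := hx _ (hy e he)
  simpa [mul_assoc] using this

lemma mulSpan_le {C D U : Submodule K (ι → K)}
    (h : ∀ c ∈ C, ∀ d ∈ D, c * d ∈ U) : mulSpan C D ≤ U := by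
  rw [mulSpan, span_le]
  rintro x ⟨c, hc, d, hd, rfl⟩
  exact h c hc d hd

lemma mul_mem_mulSpan {C D : Submodule K (ι → K)} {c d : ι → K}
    (hc : c ∈ C) (hd : d ∈ D) : c * d ∈ mulSpan C D :=
  subset_span ⟨c, hc, d, hd, rfl⟩

lemma mulSpan_mono {C C' D D' : Submodule K (ι → K)} (h1 : C ≤ C') (h2 : D ≤ D') :
    mulSpan C D ≤ mulSpan C' D' :=
  mulSpan_le fun c hc d hd => mul_mem_mulSpan (h1 hc) (h2 hd)

lemma mulSpan_bot_right {C : Submodule K (ι → K)} : mulSpan C (⊥ : Submodule K (ι → K)) = ⊥ := by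
  apply le_antisymm
  · apply mulSpan_le
    intro c _ d hd
    rw [Submodule.mem_bot] at hd
    subst hd
    rw [mul_zero]
    exact Submodule.zero_mem _
  · exact bot_le

/-- restriction to coordinates satisfying `p` -/
def resL (p : ι → Prop) : (ι → K) →ₗ[K] ({i // p i} → K) :=
  LinearMap.funLeft K K Subtype.val

@[simp] lemma resL_apply (p : ι → Prop) (v : ι → K) (i : {i // p i}) :
    resL p v i = v i := rfl

lemma resL_mul (p : ι → Prop) (v w : ι → K) :
    resL (K := K) p (v * w) = resL p v * resL p w := rfl

@[simp] lemma resL_one (p : ι → Prop) : resL (K := K) p 1 = 1 := rfl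

/-- extension by zero -/
noncomputable def extL (p : ι → Prop) : ({i // p i} → K) →ₗ[K] (ι → K) where
  toFun x := fun i => if h : p i then x ⟨i, h⟩ else 0
  map_add' x y := by funext i; by_cases h : p i <;> simp [h]
  map_smul' c x := by funext i; by_cases h : p i <;> simp [h]

lemma extL_apply_pos (p : ι → Prop) (x : {i // p i} → K) {i : ι} (h : p i) :
    extL p x i = x ⟨i, h⟩ := by simp [extL, h]

lemma extL_apply_neg (p : ι → Prop) (x : {i // p i} → K) {i : ι} (h : ¬ p i) :
    extL p x i = 0 := by simp [extL, h]

@[simp] lemma resL_extL (p : ι → Prop) (x : {i // p i} → K) :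
    resL p (extL p x) = x := by
  funext i; simp [extL, i.2]

lemma extL_injective (p : ι → Prop) :
    Function.Injective (extL (K := K) p) := by
  intro x y h
  have := congrArg (resL (K := K) p) h
  simpa using this

/-- indicator function of `p` -/
noncomputable def indK (p : ι → Prop) : ι → K := fun i => if p i then 1 else 0

@[simp] lemma indK_apply_pos {p : ι → Prop} {i : ι} (h : p i) : indK (K := K) p i = 1 := by
  simp [indK, h]

@[simp] lemma indK_apply_neg {p : ι → Prop} {i : ι} (h : ¬ p i) : indK (K := K) p i = 0 := by
  simp [indK, h]

lemma extL_resL_eq_indK_mul (p : ι → Prop) (v : ι → K) :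
    extL p (resL p v) = indK p * v := by
  funext i
  by_cases h : p i
  · simp [extL, indK, h]
  · simp [extL, indK, h]

lemma mulSpan_map (p : ι → Prop) (C D : Submodule K (ι → K)) :
    (mulSpan C D).map (resL p) = mulSpan (C.map (resL p)) (D.map (resL p)) := by
  rw [mulSpan, mulSpan, Submodule.map_span]
  congr 1
  ext y
  constructor
  · rintro ⟨x, ⟨c, hc, d, hd, rfl⟩, rfl⟩
    exact ⟨resL p c, ⟨c, hc, rfl⟩, resL p d, ⟨d, hd, rfl⟩, rfl⟩
  · rintro ⟨c', ⟨c, hc, rfl⟩, d', ⟨d, hd, rfl⟩, rfl⟩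
    exact ⟨c * d, ⟨c, hc, d, hd, rfl⟩, rfl⟩

/-- rank–nullity for submodules under a map. -/
lemma finrank_map_add_finrank_inf_ker {M M₂ : Type*} [AddCommGroup M] [Module K M]
    [AddCommGroup M₂] [Module K M₂] [FiniteDimensional K M]
    (V : Submodule K M) (f : M →ₗ[K] M₂) :
    finrank K (V.map f) + finrank K ↥(V ⊓ LinearMap.ker f) = finrank K V := by
  have h := LinearMap.finrank_range_add_finrank_ker (f.domRestrict V)
  rw [LinearMap.range_domRestrict, LinearMap.ker_domRestrict] at h
  have e : (Submodule.comap V.subtype (LinearMap.ker f)) ≃ₗ[K] ↥(V ⊓ LinearMap.ker f) := by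
    have he : Submodule.comap V.subtype (LinearMap.ker f)
        = Submodule.comap V.subtype (V ⊓ LinearMap.ker f) := by
      rw [Submodule.comap_inf]
      have ht : Submodule.comap V.subtype V = ⊤ := by
        ext x; simp [x.2]
      simp [ht]
    rw [he]
    exact Submodule.comapSubtypeEquivOfLe inf_le_left
  rw [e.finrank_eq] at h
  exact h

/-- membership of finite products in a multiplicatively closed unital submodule -/
lemma prod_mem_mulclosed {H : Submodule K (ι → K)} (h1 : (1 : ι → K) ∈ H)
    (hmul : ∀ x ∈ H, ∀ y ∈ H, x * y ∈ H) {α : Type*} (s : Finset α) (g : α → (ι → K))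
    (hg : ∀ a ∈ s, g a ∈ H) : (∏ a ∈ s, g a) ∈ H := by
  classical
  induction s using Finset.induction_on with
  | empty => simpa using h1
  | insert _ _ hnot ih =>
    rename_i a s
    rw [Finset.prod_insert hnot]
    exact hmul _ (hg a (Finset.mem_insert_self a s)) _
      (ih fun b hb => hg b (Finset.mem_insert_of_mem hb))

/-- The relation "all elements of H take equal values at i and j". -/
def relH (H : Submodule K (ι → K)) (i j : ι) : Prop := ∀ h ∈ H, h i = h j

/-- Lagrange interpolation: the indicator of an equivalence class of `relH` belongs to `H`,
provided `H` is unital and multiplicatively closed. -/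
lemma indicator_class_mem [Fintype ι] {H : Submodule K (ι → K)} (h1 : (1 : ι → K) ∈ H)
    (hmul : ∀ x ∈ H, ∀ y ∈ H, x * y ∈ H) (i : ι) :
    indK (fun j => relH H i j) ∈ H := by
  -- for each j not related to i, choose a separating h
  have hsep : ∀ j : ι, ¬ relH H i j → ∃ h ∈ H, h i ≠ h j := by
    intro j hj
    by_contra hc
    push_neg at hc
    exact hj fun h hh => hc h hh
  set bad : Finset ι := Finset.univ.filter (fun j => ¬ relH H i j) with hbad
  choose hf hfH hfne using hsep
  -- the factor for j ∈ bad
  let fac : ι → (ι → K) := fun j =>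
    if hj : ¬ relH H i j then
      (hf j hj i - hf j hj j)⁻¹ • (hf j hj - (hf j hj j) • (1 : ι → K))
    else 1
  have hfacH : ∀ j, fac j ∈ H := by
    intro j
    by_cases hj : ¬ relH H i j
    · simp only [fac, dif_pos hj]
      exact H.smul_mem _ (H.sub_mem (hfH j hj) (H.smul_mem _ h1))
    · simp only [fac, dif_neg hj]
      exact h1
  have hprodH : (∏ j ∈ bad, fac j) ∈ H := prod_mem_mulclosed h1 hmul _ _ (fun a _ => hfacH a)
  have key : (∏ j ∈ bad, fac j) = indK (fun j => relH H i j) := by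
    funext k
    rw [Finset.prod_apply]
    by_cases hk : relH H i k
    · -- all factors equal 1 at k
      have : ∀ j ∈ bad, fac j k = 1 := by
        intro j hj
        have hj' : ¬ relH H i j := (Finset.mem_filter.mp hj).2
        have hKi : hf j hj' k = hf j hj' i := (hk _ (hfH j hj')).symm
        simp only [fac, dif_pos hj', Pi.smul_apply, Pi.sub_apply, Pi.one_apply, smul_eq_mul]
        rw [hKi]
        field_simp [sub_ne_zero.mpr (hfne j hj')]
      rw [Finset.prod_eq_one this]
      simp [hk]
    · -- the factor at k itself is 0
      have hkbad : k ∈ bad := by simp [hbad, hk]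
      have hzero : fac k k = 0 := by
        simp only [fac, dif_pos hk, Pi.smul_apply, Pi.sub_apply, Pi.one_apply, smul_eq_mul]
        simp
      rw [Finset.prod_eq_zero (f := fun c => fac c k) hkbad hzero]
      simp [hk]
  rwa [key] at hprodH

end Infra

section Grading
variable {K : Type*} [Field K] {ι : Type} [Fintype ι]

lemma indK_congr {p q : ι → Prop} (h : ∀ i, p i ↔ q i) : indK (K := K) p = indK q := by
  funext i
  by_cases hi : p i
  · rw [indK_apply_pos hi, indK_apply_pos ((h i).mp hi)]
  · rw [indK_apply_neg hi, indK_apply_neg (fun hq => hi ((h i).mpr hq))]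

/-- The setoid attached to a unital multiplicatively closed submodule. -/
def setoidH (H : Submodule K (ι → K)) : Setoid ι :=
  ⟨fun i j => relH H i j,
   ⟨fun _ _ _ => rfl, fun h x hx => (h x hx).symm, fun h h' x hx => (h x hx).trans (h' x hx)⟩⟩

lemma indicator_class_mem' {H : Submodule K (ι → K)} (h1 : (1 : ι → K) ∈ H)
    (hmul : ∀ x ∈ H, ∀ y ∈ H, x * y ∈ H) (q : Quotient (setoidH H)) :
    indK (fun i => Quotient.mk (setoidH H) i = q) ∈ H := by
  have hout : Quotient.mk (setoidH H) q.out = q := Quotient.out_eq q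
  have : indK (K := K) (fun i => Quotient.mk (setoidH H) i = q)
      = indK (fun j => relH H q.out j) := by
    apply indK_congr
    intro i
    constructor
    · intro h
      have h2 : Quotient.mk (setoidH H) i = Quotient.mk (setoidH H) q.out := by rw [h, hout]
      have h3 := Quotient.exact h2
      exact fun x hx => (h3 x hx).symm
    · intro h
      rw [← hout]
      exact Quotient.sound (fun x hx => (h x hx).symm)
  rw [this]
  exact indicator_class_mem h1 hmul q.out

variable (s : Setoid ι)

/-- the component maps into the restricted pieces -/
noncomputable def gradePi (V : Submodule K (ι → K)) :
    ↥V →ₗ[K] ((q : Quotient s) → ↥(V.map (resL (fun i => Quotient.mk s i = q)))) :=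
  LinearMap.pi (fun q => ((resL (fun i => Quotient.mk s i = q)).domRestrict V).codRestrict _
    (fun v => Submodule.mem_map_of_mem v.2))

lemma gradePi_injective (V : Submodule K (ι → K)) : Function.Injective (gradePi s V) := by
  rw [injective_iff_map_eq_zero]
  intro v hv
  apply Subtype.ext
  funext i
  have h1 : ((gradePi s V) v) (Quotient.mk s i) = 0 := by rw [hv]; rfl
  have h2 := congrFun (congrArg Subtype.val h1) ⟨i, rfl⟩
  exact h2

lemma finrank_le_sum_classes (V : Submodule K (ι → K)) :
    finrank K ↥V ≤ ∑ q : Quotient s, finrank K ↥(V.map (resL (fun i => Quotient.mk s i = q))) := by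
  have h := LinearMap.finrank_le_finrank_of_injective (gradePi_injective s V)
  rwa [Module.finrank_pi_fintype] at h

lemma gradePi_surjective (V : Submodule K (ι → K))
    (hst : ∀ q : Quotient s, ∀ v ∈ V, indK (fun i => Quotient.mk s i = q) * v ∈ V) :
    Function.Surjective (gradePi s V) := by
  intro y
  have hch : ∀ q : Quotient s, ∃ w ∈ V, resL (fun i => Quotient.mk s i = q) w = (y q : _) := by
    intro q
    obtain ⟨w, hw, hw2⟩ := (y q).2
    exact ⟨w, hw, hw2⟩
  choose w hwV hwres using hch
  have hv : (∑ q : Quotient s, indK (fun i => Quotient.mk s i = q) * w q) ∈ V :=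
    Submodule.sum_mem _ (fun q _ => hst q _ (hwV q))
  refine ⟨⟨_, hv⟩, ?_⟩
  funext q
  apply Subtype.ext
  show resL (fun i => Quotient.mk s i = q) (∑ q' : Quotient s, indK (fun i => Quotient.mk s i = q') * w q') = (y q : _)
  rw [map_sum]
  rw [Finset.sum_eq_single q]
  · rw [← hwres q]
    funext i
    have hi : Quotient.mk s i.val = q := i.2
    simp [indK, hi]
  · intro q' _ hq'
    funext i
    have hi : Quotient.mk s i.val = q := i.2
    have hne : ¬ (Quotient.mk s i.val = q') := by rw [hi]; exact fun h => hq' h.symm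
    show indK (fun j => Quotient.mk s j = q') i.val * w q' i.val = 0
    simp [indK, hne]
  · intro h
    exact absurd (Finset.mem_univ q) h

lemma finrank_eq_sum_classes (V : Submodule K (ι → K))
    (hst : ∀ q : Quotient s, ∀ v ∈ V, indK (fun i => Quotient.mk s i = q) * v ∈ V) :
    finrank K ↥V = ∑ q : Quotient s, finrank K ↥(V.map (resL (fun i => Quotient.mk s i = q))) := by
  have e := LinearEquiv.ofBijective (gradePi s V) ⟨gradePi_injective s V, gradePi_surjective s V hst⟩
  rw [e.finrank_eq, Module.finrank_pi_fintype]

end Grading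

section StabLemmas
variable {K : Type*} [Field K] {ι : Type}

lemma extL_mul_eq (p : ι → Prop) (x : {i // p i} → K) (e : ι → K) :
    extL p x * e = extL p (x * resL p e) := by
  funext i
  show extL p x i * e i = extL p (x * resL p e) i
  by_cases h : p i
  · rw [extL_apply_pos p x h, extL_apply_pos p _ h]; rfl
  · rw [extL_apply_neg p x h, extL_apply_neg p _ h, zero_mul]

lemma extL_stab_mem {p : ι → Prop} {E : Submodule K (ι → K)}
    (hp : indK p ∈ stabS E) {x : {i // p i} → K}
    (hx : x ∈ stabS (E.map (resL p))) : extL p x ∈ stabS E := by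
  intro e he
  rw [extL_mul_eq]
  have hmem : x * resL p e ∈ E.map (resL p) := hx _ (Submodule.mem_map_of_mem he)
  obtain ⟨e', he', hre⟩ := hmem
  rw [← hre, extL_resL_eq_indK_mul]
  exact hp e' he'

lemma stabS_map_class (E : Submodule K (ι → K)) [Fintype ι]
    (q : Quotient (setoidH (stabS E))) :
    stabS (E.map (resL (fun i => Quotient.mk (setoidH (stabS E)) i = q)))
      ≤ K ∙ (1 : {i // Quotient.mk (setoidH (stabS E)) i = q} → K) := by
  intro x hx
  have hp : indK (K := K) (fun i => Quotient.mk (setoidH (stabS E)) i = q) ∈ stabS E :=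
    indicator_class_mem' (one_mem_stabS E) (fun a ha b hb => mul_mem_stabS ha hb) q
  have hx' : extL (fun i => Quotient.mk (setoidH (stabS E)) i = q) x ∈ stabS E :=
    extL_stab_mem hp hx
  have hrep : Quotient.mk (setoidH (stabS E)) q.out = q := Quotient.out_eq q
  have hconst : ∀ j : {i // Quotient.mk (setoidH (stabS E)) i = q}, x j = x ⟨q.out, hrep⟩ := by
    intro j
    have hqq : Quotient.mk (setoidH (stabS E)) j.val = Quotient.mk (setoidH (stabS E)) q.out := by
      rw [j.2, hrep]
    have hr := Quotient.exact hqq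
    have h5 := hr _ hx'
    rwa [extL_apply_pos _ x j.2, extL_apply_pos _ x hrep] at h5
  rw [Submodule.mem_span_singleton]
  refine ⟨x ⟨q.out, hrep⟩, ?_⟩
  funext j
  rw [Pi.smul_apply, Pi.one_apply, smul_eq_mul, mul_one, hconst j]

lemma finrank_stabS_map_class_le_one (E : Submodule K (ι → K)) [Fintype ι]
    (q : Quotient (setoidH (stabS E))) :
    finrank K ↥(stabS (E.map (resL (fun i => Quotient.mk (setoidH (stabS E)) i = q)))) ≤ 1 := by
  have h := stabS_map_class E q
  have hone : (1 : {i // Quotient.mk (setoidH (stabS E)) i = q} → K) ≠ 0 := by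
    intro hc
    have := congrFun hc ⟨q.out, Quotient.out_eq q⟩
    simp at this
  calc finrank K ↥(stabS (E.map (resL (fun i => Quotient.mk (setoidH (stabS E)) i = q))))
      ≤ finrank K ↥(K ∙ (1 : {i // Quotient.mk (setoidH (stabS E)) i = q} → K)) :=
        Submodule.finrank_mono h
    _ = 1 := finrank_span_singleton hone

end StabLemmas

section Supp
variable {K : Type*} [Field K] {ι : Type}

/-- support of a submodule of functions -/
def supS (V : Submodule K (ι → K)) : Set ι := {i | ∃ v ∈ V, v i ≠ 0}

lemma not_mem_supS {V : Submodule K (ι → K)} {i : ι} (h : i ∉ supS V) :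
    ∀ v ∈ V, v i = 0 := by
  intro v hv
  by_contra hc
  exact h ⟨v, hv, hc⟩

lemma supS_mulSpan_left (C D : Submodule K (ι → K)) : supS (mulSpan C D) ⊆ supS C := by
  intro i hi
  by_contra hc
  obtain ⟨e, he, hei⟩ := hi
  have hker : mulSpan C D ≤ LinearMap.ker (LinearMap.proj (R := K) (φ := fun _ : ι => K) i) := by
    apply mulSpan_le
    intro c hcm d _
    have : c i = 0 := not_mem_supS hc c hcm
    simp [LinearMap.mem_ker, this]
  have := hker he
  simp [LinearMap.mem_ker] at this
  exact hei this

lemma supS_mulSpan_right (C D : Submodule K (ι → K)) : supS (mulSpan C D) ⊆ supS D := by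
  intro i hi
  by_contra hc
  obtain ⟨e, he, hei⟩ := hi
  have hker : mulSpan C D ≤ LinearMap.ker (LinearMap.proj (R := K) (φ := fun _ : ι => K) i) := by
    apply mulSpan_le
    intro c _ d hdm
    have : d i = 0 := not_mem_supS hc d hdm
    simp [LinearMap.mem_ker, this]
  have := hker he
  simp [LinearMap.mem_ker] at this
  exact hei this

lemma finrank_le_card_of_supported [Fintype ι] (p : ι → Prop) (V : Submodule K (ι → K))
    (h : ∀ v ∈ V, ∀ i, ¬ p i → v i = 0) :
    finrank K ↥V ≤ Nat.card {i // p i} := by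
  rw [Nat.card_eq_fintype_card]
  have hinf : V ⊓ LinearMap.ker (resL (K := K) p) = ⊥ := by
    rw [Submodule.eq_bot_iff]
    rintro x ⟨hxV, hxk⟩
    funext i
    by_cases hi : p i
    · have := congrFun (LinearMap.mem_ker.mp hxk) ⟨i, hi⟩
      simpa using this
    · exact h x hxV i hi
  have := finrank_map_add_finrank_inf_ker V (resL (K := K) p)
  rw [hinf] at this
  simp only [finrank_bot, add_zero] at this
  rw [← this]
  calc finrank K ↥(V.map (resL p)) ≤ finrank K ({i // p i} → K) := Submodule.finrank_le _
    _ = Fintype.card {i // p i} := Module.finrank_pi K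

lemma nat_card_subtype_add [Fintype ι] (p : ι → Prop) :
    Nat.card {i // p i} + Nat.card {i // ¬ p i} = Fintype.card ι := by
  rw [Nat.card_eq_fintype_card, Nat.card_eq_fintype_card]
  rw [Fintype.card_subtype, Fintype.card_subtype]
  rw [Finset.card_filter_add_card_filter_not]
  exact Finset.card_univ

/-- the kernel of restriction is spanned by the complementary coordinates -/
lemma finrank_ker_resL [Fintype ι] (p : ι → Prop) :
    finrank K ↥(LinearMap.ker (resL (K := K) p)) = Nat.card {i // ¬ p i} := by
  have hkerrange : LinearMap.ker (resL (K := K) p)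
      = LinearMap.range (extL (fun i => ¬ p i)) := by
    ext x
    constructor
    · intro hx
      refine ⟨resL (fun i => ¬ p i) x, ?_⟩
      funext i
      by_cases hi : p i
      · rw [extL_apply_neg _ _ (by simpa using hi)]
        have := congrFun (LinearMap.mem_ker.mp hx) ⟨i, hi⟩
        simpa using this.symm
      · rw [extL_apply_pos (fun i => ¬ p i) (resL (fun i => ¬ p i) x) hi]; rfl
    · rintro ⟨y, rfl⟩
      rw [LinearMap.mem_ker]
      funext i
      exact extL_apply_neg _ y (by simpa using i.2)
  rw [hkerrange, LinearMap.finrank_range_of_inj (extL_injective _), Module.finrank_pi,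
    ← Nat.card_eq_fintype_card]

end Supp

section Binary
variable {K : Type*} [Field K] {ι : Type} [Fintype ι]

lemma finrank_le_res_add_res (p : ι → Prop) (V : Submodule K (ι → K)) :
    finrank K ↥V ≤ finrank K ↥(V.map (resL p)) + finrank K ↥(V.map (resL (fun i => ¬ p i))) := by
  have h1 := finrank_map_add_finrank_inf_ker V (resL (K := K) p)
  have h2 := finrank_map_add_finrank_inf_ker (V ⊓ LinearMap.ker (resL (K := K) p))
      (resL (K := K) (fun i => ¬ p i))
  have hinf : (V ⊓ LinearMap.ker (resL (K := K) p)) ⊓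
      LinearMap.ker (resL (K := K) (fun i => ¬ p i)) = ⊥ := by
    rw [Submodule.eq_bot_iff]
    rintro x ⟨⟨_, hk1⟩, hk2⟩
    funext i
    by_cases hi : p i
    · have := congrFun (LinearMap.mem_ker.mp hk1) ⟨i, hi⟩
      simpa using this
    · have := congrFun (LinearMap.mem_ker.mp hk2) ⟨i, hi⟩
      simpa using this
  rw [hinf] at h2
  simp only [finrank_bot, add_zero] at h2
  have h3 : finrank K ↥((V ⊓ LinearMap.ker (resL (K := K) p)).map (resL (fun i => ¬ p i)))
      ≤ finrank K ↥(V.map (resL (fun i => ¬ p i))) :=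
    Submodule.finrank_mono (Submodule.map_mono inf_le_left)
  omega

lemma res_add_res_le_finrank (p : ι → Prop) (E : Submodule K (ι → K))
    (hp' : indK (fun i => ¬ p i) ∈ stabS E) :
    finrank K ↥(E.map (resL p)) + finrank K ↥(E.map (resL (fun i => ¬ p i)))
      ≤ finrank K ↥E := by
  have h1 := finrank_map_add_finrank_inf_ker E (resL (K := K) p)
  -- E.map (resL ¬p) = (E ⊓ ker (resL p)).map (resL ¬p)
  have heq : E.map (resL (K := K) (fun i => ¬ p i))
      = (E ⊓ LinearMap.ker (resL (K := K) p)).map (resL (fun i => ¬ p i)) := by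
    apply le_antisymm
    · rintro y ⟨e, he, rfl⟩
      refine ⟨indK (fun i => ¬ p i) * e, ⟨hp' e he, ?_⟩, ?_⟩
      · show _ ∈ LinearMap.ker (resL (K := K) p)
        rw [LinearMap.mem_ker]
        funext i
        show indK (fun i => ¬ p i) i.val * e i.val = 0
        have : ¬ ¬ p i.val := by simpa using i.2
        simp [indK, this]
      · funext i
        show indK (fun i => ¬ p i) i.val * e i.val = e i.val
        have : ¬ p i.val := i.2
        simp [indK, this]
    · exact Submodule.map_mono inf_le_left
  have h2 : finrank K ↥(E.map (resL (K := K) (fun i => ¬ p i)))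
      ≤ finrank K ↥(E ⊓ LinearMap.ker (resL (K := K) p)) := by
    rw [heq]
    exact Submodule.finrank_map_le _ _
  omega

lemma stab_pieces_le (p : ι → Prop) (E : Submodule K (ι → K))
    (hp : indK p ∈ stabS E) (hp' : indK (fun i => ¬ p i) ∈ stabS E) :
    finrank K ↥(stabS (E.map (resL p))) + finrank K ↥(stabS (E.map (resL (fun i => ¬ p i))))
      ≤ finrank K ↥(stabS E) := by
  set X := (stabS (E.map (resL (K := K) p))).map (extL p) with hX
  set Y := (stabS (E.map (resL (K := K) (fun i => ¬ p i)))).map (extL (fun i => ¬ p i)) with hY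
  have hXle : X ≤ stabS E := by
    rintro _ ⟨x, hx, rfl⟩
    exact extL_stab_mem hp hx
  have hYle : Y ≤ stabS E := by
    rintro _ ⟨y, hy, rfl⟩
    exact extL_stab_mem hp' hy
  have hXY : X ⊓ Y = ⊥ := by
    rw [Submodule.eq_bot_iff]
    rintro z ⟨⟨x, _, rfl⟩, ⟨y, _, hy⟩⟩
    funext i
    show extL p x i = (0 : K)
    by_cases hi : p i
    · rw [← hy, extL_apply_neg _ y (by simpa using hi)]
    · exact extL_apply_neg _ x hi
  have hdX : finrank K ↥X = finrank K ↥(stabS (E.map (resL (K := K) p))) :=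
    (Submodule.equivMapOfInjective _ (extL_injective p) _).finrank_eq.symm
  have hdY : finrank K ↥Y = finrank K ↥(stabS (E.map (resL (K := K) (fun i => ¬ p i)))) :=
    (Submodule.equivMapOfInjective _ (extL_injective _) _).finrank_eq.symm
  have hsup := Submodule.finrank_sup_add_finrank_inf_eq X Y
  rw [hXY] at hsup
  simp only [finrank_bot, add_zero] at hsup
  have hle : finrank K ↥(X ⊔ Y) ≤ finrank K ↥(stabS E) :=
    Submodule.finrank_mono (sup_le hXle hYle)
  omega

end Binary

section MainProof
variable {K : Type*} [Field K]

lemma finrank_submodule_le_card {ι : Type} [Fintype ι] (V : Submodule K (ι → K)) :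
    Module.finrank K V ≤ Fintype.card ι := by
  calc Module.finrank K V ≤ Module.finrank K (ι → K) := Submodule.finrank_le _
  _ = Fintype.card ι := Module.finrank_pi K

lemma exists_ne_zero_of_ne_bot {ι : Type} {V : Submodule K (ι → K)} (h : V ≠ ⊥) :
    ∃ v ∈ V, v ≠ 0 := by
  by_contra hc
  push_neg at hc
  exact h (Submodule.eq_bot_iff V |>.mpr hc)

lemma map_resL_ne_bot {ι : Type} {V : Submodule K (ι → K)} {p : ι → Prop}
    {v : ι → K} {i : ι} (hv : v ∈ V) (hvi : v i ≠ 0) (hpi : p i) :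
    V.map (resL p) ≠ ⊥ := by
  intro hb
  have : resL p v ∈ V.map (resL p) := Submodule.mem_map_of_mem hv
  rw [hb, Submodule.mem_bot] at this
  have := congrFun this ⟨i, hpi⟩
  exact hvi this

set_option maxHeartbeats 3200000 in
theorem main_aux : ∀ (N : ℕ) (ι : Type) [Fintype ι] (C D : Submodule K (ι → K)),
    Fintype.card ι * (Fintype.card ι + 1) + Module.finrank K D ≤ N → C ≠ ⊥ → D ≠ ⊥ →
    Module.finrank K C + Module.finrank K D ≤
      Module.finrank K (mulSpan C D) + Module.finrank K (stabS (mulSpan C D)) := by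
  intro N
  induction N using Nat.strong_induction_on with
  | _ N ih =>
  intro ι instι C D hμ hC hD
  -- convenient induction hypotheses
  have IH_small : ∀ (κ : Type) [Fintype κ], Fintype.card κ < Fintype.card ι →
      ∀ (C' D' : Submodule K (κ → K)), C' ≠ ⊥ → D' ≠ ⊥ →
      Module.finrank K C' + Module.finrank K D' ≤
        Module.finrank K (mulSpan C' D') + Module.finrank K (stabS (mulSpan C' D')) := by
    intro κ instκ hκ C' D' hC' hD'
    have h1 : Module.finrank K D' ≤ Fintype.card κ := finrank_submodule_le_card D'
    have h2 : Fintype.card κ * (Fintype.card κ + 1) + Module.finrank K D' < N := by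
      have h3 : Fintype.card κ + 1 ≤ Fintype.card ι := hκ
      nlinarith [hμ, h1, h3]
    exact ih _ h2 κ C' D' le_rfl hC' hD'
  have IH_D : ∀ (C' D' : Submodule K (ι → K)), Module.finrank K D' < Module.finrank K D →
      C' ≠ ⊥ → D' ≠ ⊥ →
      Module.finrank K C' + Module.finrank K D' ≤
        Module.finrank K (mulSpan C' D') + Module.finrank K (stabS (mulSpan C' D')) := by
    intro C' D' hlt hC' hD'
    have h2 : Fintype.card ι * (Fintype.card ι + 1) + Module.finrank K D' < N := by omega
    exact ih _ h2 ι C' D' le_rfl hC' hD'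
  -- basic nonemptiness
  have hιne : Nonempty ι := by
    obtain ⟨c, hcC, hc0⟩ := exists_ne_zero_of_ne_bot hC
    by_contra hone
    exact hc0 (funext fun i => absurd ⟨i⟩ hone)
  -- make the product and stabilizer opaque
  obtain ⟨E, hE_def⟩ : ∃ E', mulSpan C D = E' := ⟨_, rfl⟩
  rw [hE_def]
  obtain ⟨H, hH_def⟩ : ∃ H', stabS E = H' := ⟨_, rfl⟩
  rw [hH_def]
  have h1H : (1 : ι → K) ∈ H := by rw [← hH_def]; exact one_mem_stabS E
  have hmulH : ∀ x ∈ H, ∀ y ∈ H, x * y ∈ H := by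
    intro a ha b hb
    rw [← hH_def] at ha hb ⊢
    exact mul_mem_stabS ha hb
  by_cases hE : E = ⊥
  · -- CASE 0 : E = ⊥
    have hHtop : H = ⊤ := by
      rw [← hH_def, hE]
      ext x
      simp only [Submodule.mem_top, iff_true, mem_stabS]
      intro e he
      rw [Submodule.mem_bot] at he
      subst he
      simp
    have hfrE : Module.finrank K E = 0 := by rw [hE]; exact finrank_bot K _
    have hfrH : Module.finrank K H = Fintype.card ι := by
      rw [hHtop]
      rw [finrank_top]
      exact Module.finrank_pi K
    have hCp : Module.finrank K C ≤ Nat.card {i // i ∈ supS C} :=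
      finrank_le_card_of_supported _ C (fun v hv i hi => not_mem_supS hi v hv)
    have hDp : Module.finrank K D ≤ Nat.card {i // ¬ (i ∈ supS C)} := by
      apply finrank_le_card_of_supported
      intro d hd i hnn
      by_contra hdi
      obtain ⟨c, hcm, hci⟩ := not_not.mp hnn
      have hcd : c * d ∈ E := by rw [← hE_def]; exact mul_mem_mulSpan hcm hd
      rw [hE, Submodule.mem_bot] at hcd
      have := congrFun hcd i
      simp only [Pi.mul_apply, Pi.zero_apply] at this
      exact (mul_ne_zero hci hdi) this
    have hcards := nat_card_subtype_add (fun i => i ∈ supS C)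
    omega
  by_cases hsup : supS E = Set.univ
  · -- CASE 2 : full support
    have hsupE : ∀ i : ι, i ∈ supS (mulSpan C D) := by
      intro i
      rw [hE_def, hsup]
      exact Set.mem_univ i
    have hsupC : ∀ i : ι, i ∈ supS C := fun i => supS_mulSpan_left C D (hsupE i)
    have hsupD : ∀ i : ι, i ∈ supS D := fun i => supS_mulSpan_right C D (hsupE i)
    have hone_ne : (1 : ι → K) ≠ 0 := by
      obtain ⟨i₀⟩ := hιne
      intro hcon
      have := congrFun hcon i₀
      simp at this
    by_cases hH1 : Module.finrank K H ≤ 1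
    · -- CASE 2b : trivial stabilizer
      have hHspan : H = K ∙ (1 : ι → K) := by
        symm
        apply Submodule.eq_of_le_of_finrank_le
        · rw [Submodule.span_le, Set.singleton_subset_iff]
          exact h1H
        · calc Module.finrank K H ≤ 1 := hH1
          _ = Module.finrank K (K ∙ (1 : ι → K)) := (finrank_span_singleton hone_ne).symm
      have hfrH : Module.finrank K H = 1 := by
        rw [hHspan]
        exact finrank_span_singleton hone_ne
      rcases Nat.lt_or_ge (Module.finrank K D) 2 with hr | hr
      · -- finrank D = 1
        have hr1 : Module.finrank K D = 1 := by
          have h0 : Module.finrank K D ≠ 0 := by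
            intro h0
            exact hD (Submodule.finrank_eq_zero.mp h0)
          omega
        obtain ⟨d, hdD, hd0⟩ := exists_ne_zero_of_ne_bot hD
        have hDspan : D = K ∙ d := by
          symm
          apply Submodule.eq_of_le_of_finrank_le
          · rw [Submodule.span_le, Set.singleton_subset_iff]
            exact hdD
          · rw [hr1, finrank_span_singleton hd0]
        have hdfull : ∀ i, d i ≠ 0 := by
          intro i hdi0
          obtain ⟨v, hvD, hvi⟩ := hsupD i
          rw [hDspan, Submodule.mem_span_singleton] at hvD
          obtain ⟨a, rfl⟩ := hvD
          apply hvi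
          rw [Pi.smul_apply, hdi0, smul_zero]
        have hEmap : E = C.map (LinearMap.mulLeft K d) := by
          rw [← hE_def]
          apply le_antisymm
          · apply mulSpan_le
            intro c hc v hv
            rw [hDspan, Submodule.mem_span_singleton] at hv
            obtain ⟨a, rfl⟩ := hv
            refine ⟨a • c, C.smul_mem a hc, ?_⟩
            rw [LinearMap.mulLeft_apply]
            rw [mul_smul_comm, mul_smul_comm, mul_comm d c]
          · rintro _ ⟨c, hc, rfl⟩
            rw [LinearMap.mulLeft_apply, mul_comm]
            exact mul_mem_mulSpan hc (by rw [hDspan]; exact Submodule.mem_span_singleton_self d)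
        have hmulinj : Function.Injective (LinearMap.mulLeft K d) := by
          intro x y hxy
          funext i
          have hcf := congrFun hxy i
          simp only [LinearMap.mulLeft_apply, Pi.mul_apply] at hcf
          exact mul_left_cancel₀ (hdfull i) hcf
        have hfrE : Module.finrank K E = Module.finrank K C := by
          rw [hEmap]
          exact ((Submodule.equivMapOfInjective _ hmulinj C).finrank_eq).symm
        omega
      · -- finrank D ≥ 2 : THE CORE
        obtain ⟨i₀⟩ := hιne
        obtain ⟨dh, hdhD, hdhi⟩ := hsupD i₀
        set prj : (ι → K) →ₗ[K] K := LinearMap.proj (R := K) (φ := fun _ : ι => K) i₀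
          with hprj_def
        obtain ⟨W, hW_def⟩ : ∃ W', D ⊓ LinearMap.ker prj = W' := ⟨_, rfl⟩
        have hWD : W ≤ D := by rw [← hW_def]; exact inf_le_left
        have hWi₀ : ∀ w ∈ W, w i₀ = 0 := by
          intro w hw
          rw [← hW_def] at hw
          exact (Submodule.mem_inf.mp hw).2
        -- finrank W + 1 = finrank D
        have hWfr : Module.finrank K W + 1 = Module.finrank K D := by
          have hdec := finrank_map_add_finrank_inf_ker D prj
          have hone : Module.finrank K (D.map prj) = 1 := by
            have hle : Module.finrank K (D.map prj) ≤ 1 := by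
              calc Module.finrank K (D.map prj) ≤ Module.finrank K K := Submodule.finrank_le _
              _ = 1 := Module.finrank_self K
            have hne : D.map prj ≠ ⊥ := by
              intro hb
              have hmem : prj dh ∈ D.map prj := Submodule.mem_map_of_mem hdhD
              rw [hb, Submodule.mem_bot] at hmem
              exact hdhi hmem
            have h0 : Module.finrank K (D.map prj) ≠ 0 :=
              fun h0 => hne (Submodule.finrank_eq_zero.mp h0)
            omega
          rw [hone, hW_def] at hdec
          omega
        have hWne : W ≠ ⊥ := by
          intro hb
          rw [hb] at hWfr
          rw [finrank_bot] at hWfr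
          omega
        obtain ⟨E₁, hE₁_def⟩ : ∃ X, mulSpan C W = X := ⟨_, rfl⟩
        have hE₁leE : E₁ ≤ E := by
          rw [← hE₁_def, ← hE_def]
          exact mulSpan_mono le_rfl hWD
        have hE₁i₀ : ∀ x ∈ E₁, x i₀ = 0 := by
          intro x hx
          rw [← hE₁_def] at hx
          have hker : mulSpan C W ≤ LinearMap.ker prj := by
            apply mulSpan_le
            intro c _ w hw
            rw [LinearMap.mem_ker]
            show (c * w) i₀ = 0
            rw [Pi.mul_apply, hWi₀ w hw, mul_zero]
          exact hker hx
        have hE₁lt : Module.finrank K E₁ < Module.finrank K E := by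
          apply Submodule.finrank_lt_finrank_of_lt
          apply lt_of_le_of_ne hE₁leE
          intro heq
          have hi₀mem : i₀ ∈ supS E := by rw [hsup]; exact Set.mem_univ i₀
          obtain ⟨e₀, he₀E, he₀i⟩ := hi₀mem
          rw [← heq] at he₀E
          exact he₀i (hE₁i₀ e₀ he₀E)
        by_cases hH₁1 : Module.finrank K (stabS E₁) ≤ 1
        · -- SOFT subcase
          have IHW := IH_D C W (by omega) hC hWne
          rw [hE₁_def] at IHW
          omega
        · -- HARD subcase : partition by the stabilizer of E₁
          have h1H₁ : (1 : ι → K) ∈ stabS E₁ := one_mem_stabS E₁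
          have hmulH₁ : ∀ x ∈ stabS E₁, ∀ y ∈ stabS E₁, x * y ∈ stabS E₁ :=
            fun a ha b hb => mul_mem_stabS ha hb
          have hex : ∃ g ∈ stabS E₁, ∃ a b : ι, g a ≠ g b := by
            by_contra hcon
            push_neg at hcon
            have hle : stabS E₁ ≤ K ∙ (1 : ι → K) := by
              intro g hg
              rw [Submodule.mem_span_singleton]
              refine ⟨g i₀, ?_⟩
              funext j
              rw [Pi.smul_apply, Pi.one_apply, smul_eq_mul, mul_one]
              exact hcon g hg i₀ j
            have : Module.finrank K (stabS E₁) ≤ 1 := by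
              calc Module.finrank K (stabS E₁) ≤ Module.finrank K (K ∙ (1 : ι → K)) :=
                  Submodule.finrank_mono hle
              _ = 1 := finrank_span_singleton hone_ne
            exact hH₁1 this
          obtain ⟨g, hgH₁, a, b, hab⟩ := hex
          have hQab : (Quotient.mk (setoidH (stabS E₁)) a)
              ≠ (Quotient.mk (setoidH (stabS E₁)) b) :=
            fun hq => hab ((Quotient.exact hq) g hgH₁)
          have hproper : ∀ q : Quotient (setoidH (stabS E₁)),
              ∃ k, ¬ (Quotient.mk (setoidH (stabS E₁)) k = q) := by
            intro q
            by_cases hqa : Quotient.mk (setoidH (stabS E₁)) a = q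
            · exact ⟨b, fun hqb => hQab (by rw [hqa, hqb])⟩
            · exact ⟨a, hqa⟩
          have hcardq : ∀ q : Quotient (setoidH (stabS E₁)),
              Fintype.card {k // Quotient.mk (setoidH (stabS E₁)) k = q} < Fintype.card ι := by
            intro q
            obtain ⟨k, hk⟩ := hproper q
            exact Fintype.card_subtype_lt hk
          have hindq : ∀ q : Quotient (setoidH (stabS E₁)),
              indK (fun k => Quotient.mk (setoidH (stabS E₁)) k = q) ∈ stabS E₁ :=
            fun q => indicator_class_mem' h1H₁ hmulH₁ q
          -- grading of E₁
          have hE₁sum := finrank_eq_sum_classes (setoidH (stabS E₁)) E₁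
            (fun q v hv => (hindq q) v hv)
          -- the (I) inequality per class
          have hIq : ∀ q : Quotient (setoidH (stabS E₁)),
              Module.finrank K (C.map (resL (fun k => Quotient.mk (setoidH (stabS E₁)) k = q)))
              + Module.finrank K (W.map (resL (fun k => Quotient.mk (setoidH (stabS E₁)) k = q)))
              ≤ Module.finrank K (E₁.map (resL (fun k => Quotient.mk (setoidH (stabS E₁)) k = q)))
                + 1 := by
            intro q
            by_cases hWq : W.map (resL (fun k => Quotient.mk (setoidH (stabS E₁)) k = q)) = ⊥
            · -- degenerate class : singleton off the support of E₁
              have hE₁q : E₁.map (resL (fun k => Quotient.mk (setoidH (stabS E₁)) k = q)) = ⊥ := by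
                have hE₁q' : (mulSpan C W).map
                    (resL (fun k => Quotient.mk (setoidH (stabS E₁)) k = q)) = ⊥ := by
                  rw [mulSpan_map, hWq, mulSpan_bot_right]
                exact hE₁_def ▸ hE₁q'
              have hsing : ∀ k k' : ι, Quotient.mk (setoidH (stabS E₁)) k = q →
                  Quotient.mk (setoidH (stabS E₁)) k' = q → k = k' := by
                intro k k' hk hk'
                by_contra hne
                have hδ : (Pi.single k (1 : K)) ∈ stabS E₁ := by
                  intro e₁ he₁
                  have hek : e₁ k = 0 := by
                    have hm : resL (fun k => Quotient.mk (setoidH (stabS E₁)) k = q) e₁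
                        ∈ E₁.map (resL (fun k => Quotient.mk (setoidH (stabS E₁)) k = q)) :=
                      Submodule.mem_map_of_mem he₁
                    rw [hE₁q, Submodule.mem_bot] at hm
                    have := congrFun hm ⟨k, hk⟩
                    simpa using this
                  have hzero : Pi.single k (1 : K) * e₁ = 0 := by
                    funext l
                    simp only [Pi.mul_apply, Pi.zero_apply]
                    by_cases hl : l = k
                    · subst hl; rw [hek, mul_zero]
                    · rw [Pi.single_eq_of_ne hl, zero_mul]
                  rw [hzero]
                  exact E₁.zero_mem
                have hrel := Quotient.exact (hk.trans hk'.symm)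
                have hvals := hrel _ hδ
                rw [Pi.single_eq_same, Pi.single_eq_of_ne (Ne.symm hne)] at hvals
                exact one_ne_zero hvals
              have hcard1 : Nat.card {k // Quotient.mk (setoidH (stabS E₁)) k = q} = 1 := by
                rw [Nat.card_eq_fintype_card, Fintype.card_eq_one_iff]
                refine ⟨⟨q.out, Quotient.out_eq q⟩, ?_⟩
                intro y
                exact Subtype.ext (hsing _ _ y.2 (Quotient.out_eq q))
              have hCble : Module.finrank K
                  (C.map (resL (fun k => Quotient.mk (setoidH (stabS E₁)) k = q))) ≤
                  Nat.card {k // Quotient.mk (setoidH (stabS E₁)) k = q} := by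
                have hble : Module.finrank K
                    (C.map (resL (fun k => Quotient.mk (setoidH (stabS E₁)) k = q)))
                    ≤ Module.finrank K ({k // Quotient.mk (setoidH (stabS E₁)) k = q} → K) :=
                  Submodule.finrank_le _
                rw [Module.finrank_pi, ← Nat.card_eq_fintype_card] at hble
                exact hble
              rw [hWq, hE₁q]
              rw [finrank_bot]
              omega
            · -- proper class : apply the induction hypothesis on the subtype
              have hCq : C.map (resL (fun k => Quotient.mk (setoidH (stabS E₁)) k = q)) ≠ ⊥ := by
                obtain ⟨c, hcC, hci⟩ := hsupC q.out
                exact map_resL_ne_bot hcC hci (Quotient.out_eq q)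
              have IHq := IH_small {k // Quotient.mk (setoidH (stabS E₁)) k = q} (hcardq q)
                (C.map (resL (fun k => Quotient.mk (setoidH (stabS E₁)) k = q)))
                (W.map (resL (fun k => Quotient.mk (setoidH (stabS E₁)) k = q))) hCq hWq
              rw [← mulSpan_map, hE₁_def] at IHq
              have hstabq := finrank_stabS_map_class_le_one E₁ q
              omega
          -- sum over classes
          have hsumI : (∑ q : Quotient (setoidH (stabS E₁)), Module.finrank K
                (C.map (resL (fun k => Quotient.mk (setoidH (stabS E₁)) k = q))))
              + (∑ q : Quotient (setoidH (stabS E₁)), Module.finrank K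
                (W.map (resL (fun k => Quotient.mk (setoidH (stabS E₁)) k = q))))
              ≤ Module.finrank K E₁ + Nat.card (Quotient (setoidH (stabS E₁))) := by
            rw [hE₁sum, Nat.card_eq_fintype_card, ← Finset.sum_add_distrib]
            have hsle := Finset.sum_le_sum (fun q (_ : q ∈ Finset.univ) => hIq q)
            calc _ ≤ ∑ q : Quotient (setoidH (stabS E₁)), (Module.finrank K
                (E₁.map (resL (fun k => Quotient.mk (setoidH (stabS E₁)) k = q))) + 1) := hsle
            _ = _ := by rw [Finset.sum_add_distrib, Finset.sum_const, Finset.card_univ,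
                  smul_eq_mul, mul_one]
          have hCsum := finrank_le_sum_classes (setoidH (stabS E₁)) C
          have hWsum := finrank_le_sum_classes (setoidH (stabS E₁)) W
          -- the sup decomposition E = E₁ ⊔ (dh * C)
          obtain ⟨G, hG_def⟩ : ∃ G', C.map (LinearMap.mulLeft K dh) = G' := ⟨_, rfl⟩
          have hEsup : E = E₁ ⊔ G := by
            apply le_antisymm
            · rw [← hE_def]
              apply mulSpan_le
              intro c hc d hd
              have hwmem : d - (d i₀ * (dh i₀)⁻¹) • dh ∈ W := by
                rw [← hW_def]
                refine Submodule.mem_inf.mpr ⟨D.sub_mem hd (D.smul_mem _ hdhD),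
                  LinearMap.mem_ker.mpr ?_⟩
                show (d - (d i₀ * (dh i₀)⁻¹) • dh) i₀ = 0
                rw [Pi.sub_apply, Pi.smul_apply, smul_eq_mul]
                field_simp
                ring
              have hdecomp : c * d = c * (d - (d i₀ * (dh i₀)⁻¹) • dh)
                  + (LinearMap.mulLeft K dh) ((d i₀ * (dh i₀)⁻¹) • c) := by
                rw [LinearMap.mulLeft_apply, mul_sub, mul_smul_comm, mul_smul_comm,
                  mul_comm dh c]
                ring
              rw [hdecomp]
              exact Submodule.add_mem _
                (Submodule.mem_sup_left (by
                  rw [← hE₁_def]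
                  exact mul_mem_mulSpan hc hwmem))
                (Submodule.mem_sup_right (by
                  rw [← hG_def]
                  exact ⟨_, C.smul_mem _ hc, rfl⟩))
            · apply sup_le
              · exact hE₁leE
              · intro x hxG
                rw [← hG_def] at hxG
                obtain ⟨c, hc, rfl⟩ := hxG
                rw [LinearMap.mulLeft_apply, mul_comm, ← hE_def]
                exact mul_mem_mulSpan hc hdhD
          have hsupfr := Submodule.finrank_sup_add_finrank_inf_eq E₁ G
          rw [← hEsup] at hsupfr
          have hGdec := finrank_map_add_finrank_inf_ker G (E₁.mkQ)
          rw [Submodule.ker_mkQ] at hGdec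
          have hinfcomm : Module.finrank K (E₁ ⊓ G : Submodule K (ι → K))
              = Module.finrank K (G ⊓ E₁ : Submodule K (ι → K)) := by rw [inf_comm]
          obtain ⟨F, hF_def⟩ : ∃ F', (E₁.mkQ).comp (LinearMap.mulLeft K dh) = F' := ⟨_, rfl⟩
          have hCF := finrank_map_add_finrank_inf_ker C F
          have hGQ : Module.finrank K (G.map (E₁.mkQ)) = Module.finrank K (C.map F) := by
            rw [← hG_def, ← hF_def, Submodule.map_comp]
          -- the kernel bound via strict per-class forcing
          have hker_bound : Module.finrank K (C ⊓ LinearMap.ker F : Submodule K (ι → K))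
              + Nat.card (Quotient (setoidH (stabS E₁)))
              ≤ ∑ q : Quotient (setoidH (stabS E₁)), Module.finrank K
                (C.map (resL (fun k => Quotient.mk (setoidH (stabS E₁)) k = q))) := by
            have hmaple : ∀ q : Quotient (setoidH (stabS E₁)),
                ((C ⊓ LinearMap.ker F).map (resL (fun k => Quotient.mk (setoidH (stabS E₁)) k = q)))
                ≤ (C.map (resL (fun k => Quotient.mk (setoidH (stabS E₁)) k = q)))
                  ⊓ ((E₁.map (resL (fun k => Quotient.mk (setoidH (stabS E₁)) k = q))).comap
                    (LinearMap.mulLeft K (resL (fun k => Quotient.mk (setoidH (stabS E₁)) k = q) dh))) := by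
              rintro q _ ⟨x, hx, rfl⟩
              have hxC : x ∈ C := (Submodule.mem_inf.mp hx).1
              have hxk : x ∈ LinearMap.ker F := (Submodule.mem_inf.mp hx).2
              refine Submodule.mem_inf.mpr ⟨Submodule.mem_map_of_mem hxC,
                Submodule.mem_comap.mpr ?_⟩
              have hx1 : dh * x ∈ E₁ := by
                have hk := LinearMap.mem_ker.mp hxk
                rw [← hF_def, LinearMap.comp_apply, LinearMap.mulLeft_apply,
                  Submodule.mkQ_apply, Submodule.Quotient.mk_eq_zero] at hk
                exact hk
              have heq2 : (LinearMap.mulLeft K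
                  (resL (fun k => Quotient.mk (setoidH (stabS E₁)) k = q) dh))
                  (resL (fun k => Quotient.mk (setoidH (stabS E₁)) k = q) x)
                  = resL (fun k => Quotient.mk (setoidH (stabS E₁)) k = q) (dh * x) := by
                rw [LinearMap.mulLeft_apply, ← resL_mul]
              rw [heq2]
              exact Submodule.mem_map_of_mem hx1
            have hYlt : ∀ q : Quotient (setoidH (stabS E₁)),
                Module.finrank K
                  ↥((C.map (resL (fun k => Quotient.mk (setoidH (stabS E₁)) k = q)))
                  ⊓ ((E₁.map (resL (fun k => Quotient.mk (setoidH (stabS E₁)) k = q))).comap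
                    (LinearMap.mulLeft K (resL (fun k => Quotient.mk (setoidH (stabS E₁)) k = q) dh))))
                + 1 ≤ Module.finrank K
                  ↥(C.map (resL (fun k => Quotient.mk (setoidH (stabS E₁)) k = q))) := by
              intro q
              have hlt : (C.map (resL (fun k => Quotient.mk (setoidH (stabS E₁)) k = q)))
                  ⊓ ((E₁.map (resL (fun k => Quotient.mk (setoidH (stabS E₁)) k = q))).comap
                    (LinearMap.mulLeft K (resL (fun k => Quotient.mk (setoidH (stabS E₁)) k = q) dh)))
                  < C.map (resL (fun k => Quotient.mk (setoidH (stabS E₁)) k = q)) := by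
                rw [lt_iff_le_and_ne]
                refine ⟨inf_le_left, ?_⟩
                intro heq
                -- forcing: the indicator of the class would stabilize E
                have hindE : indK (fun k => Quotient.mk (setoidH (stabS E₁)) k = q) ∈ stabS E := by
                  intro e he
                  rw [hEsup, Submodule.mem_sup] at he
                  obtain ⟨e₁, he₁, gg, hgg, rfl⟩ := he
                  rw [mul_add]
                  apply Submodule.add_mem
                  · exact hE₁leE ((hindq q) e₁ he₁)
                  · rw [← hG_def] at hgg
                    obtain ⟨c, hcC, rfl⟩ := hgg
                    rw [LinearMap.mulLeft_apply]
                    have hcY : resL (fun k => Quotient.mk (setoidH (stabS E₁)) k = q) c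
                        ∈ (C.map (resL (fun k => Quotient.mk (setoidH (stabS E₁)) k = q)))
                        ⊓ ((E₁.map (resL (fun k => Quotient.mk (setoidH (stabS E₁)) k = q))).comap
                          (LinearMap.mulLeft K
                            (resL (fun k => Quotient.mk (setoidH (stabS E₁)) k = q) dh))) := by
                      rw [heq]
                      exact Submodule.mem_map_of_mem hcC
                    have hmemE₁ : resL (fun k => Quotient.mk (setoidH (stabS E₁)) k = q) (dh * c)
                        ∈ E₁.map (resL (fun k => Quotient.mk (setoidH (stabS E₁)) k = q)) := by
                      have h2 := (Submodule.mem_inf.mp hcY).2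
                      rw [Submodule.mem_comap, LinearMap.mulLeft_apply, ← resL_mul] at h2
                      exact h2
                    obtain ⟨e₁', he₁', hre⟩ := hmemE₁
                    have heq3 : indK (fun k => Quotient.mk (setoidH (stabS E₁)) k = q) * (dh * c)
                        = indK (fun k => Quotient.mk (setoidH (stabS E₁)) k = q) * e₁' := by
                      rw [← extL_resL_eq_indK_mul, ← extL_resL_eq_indK_mul, hre]
                    rw [heq3]
                    exact hE₁leE ((hindq q) e₁' he₁')
                -- contradiction with triviality of stabS E
                have hmem1 : indK (K := K) (fun k => Quotient.mk (setoidH (stabS E₁)) k = q)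
                    ∈ K ∙ (1 : ι → K) := by
                  rw [← hHspan, ← hH_def]
                  exact hindE
                rw [Submodule.mem_span_singleton] at hmem1
                obtain ⟨lam, hlam⟩ := hmem1
                obtain ⟨kw, hkw⟩ := hproper q
                have h1 := congrFun hlam q.out
                have h0 := congrFun hlam kw
                rw [Pi.smul_apply, Pi.one_apply, smul_eq_mul, mul_one] at h1 h0
                rw [indK_apply_pos (p := fun k => Quotient.mk (setoidH (stabS E₁)) k = q)
                  (Quotient.out_eq q)] at h1
                rw [indK_apply_neg (p := fun k => Quotient.mk (setoidH (stabS E₁)) k = q)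
                  hkw] at h0
                rw [h0] at h1
                exact zero_ne_one h1
              have := Submodule.finrank_lt_finrank_of_lt hlt
              omega
            have hinj : Module.finrank K (C ⊓ LinearMap.ker F : Submodule K (ι → K))
                ≤ ∑ q : Quotient (setoidH (stabS E₁)), Module.finrank K
                  ↥((C.map (resL (fun k => Quotient.mk (setoidH (stabS E₁)) k = q)))
                  ⊓ ((E₁.map (resL (fun k => Quotient.mk (setoidH (stabS E₁)) k = q))).comap
                    (LinearMap.mulLeft K
                      (resL (fun k => Quotient.mk (setoidH (stabS E₁)) k = q) dh)))) := by
              calc Module.finrank K (C ⊓ LinearMap.ker F : Submodule K (ι → K))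
                  ≤ ∑ q : Quotient (setoidH (stabS E₁)), Module.finrank K
                    ((C ⊓ LinearMap.ker F).map
                      (resL (fun k => Quotient.mk (setoidH (stabS E₁)) k = q))) :=
                    finrank_le_sum_classes _ _
              _ ≤ _ := Finset.sum_le_sum (fun q _ => Submodule.finrank_mono (hmaple q))
            have hsum2 := Finset.sum_le_sum (fun (q : Quotient (setoidH (stabS E₁)))
              (_ : q ∈ Finset.univ) => hYlt q)
            rw [Finset.sum_add_distrib, Finset.sum_const, Finset.card_univ, smul_eq_mul,
              mul_one] at hsum2
            rw [Nat.card_eq_fintype_card]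
            omega
          -- final arithmetic
          omega
    · -- CASE 2a : nontrivial stabilizer, binary split
      have hex : ∃ h ∈ H, ∃ i j : ι, h i ≠ h j := by
        by_contra hc
        push_neg at hc
        have hle : H ≤ K ∙ (1 : ι → K) := by
          intro g hg
          obtain ⟨i₀⟩ := hιne
          rw [Submodule.mem_span_singleton]
          refine ⟨g i₀, ?_⟩
          funext j
          rw [Pi.smul_apply, Pi.one_apply, smul_eq_mul, mul_one]
          exact hc g hg i₀ j
        have : Module.finrank K H ≤ 1 := by
          calc Module.finrank K H ≤ Module.finrank K (K ∙ (1 : ι → K)) :=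
              Submodule.finrank_mono hle
          _ = 1 := finrank_span_singleton hone_ne
        exact hH1 this
      obtain ⟨h, hhH, i, j, hij⟩ := hex
      have hpi : relH H i i := fun h' _ => rfl
      have hpj : ¬ relH H i j := fun hp => hij (hp h hhH)
      have hind : indK (fun k => relH H i k) ∈ H := indicator_class_mem h1H hmulH i
      have hindeq : indK (K := K) (fun k => ¬ relH H i k) = 1 - indK (fun k => relH H i k) := by
        funext k
        simp only [indK, Pi.sub_apply, Pi.one_apply]
        by_cases hk : relH H i k <;> simp [hk]
      have hindc : indK (fun k => ¬ relH H i k) ∈ H := by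
        rw [hindeq]
        exact H.sub_mem h1H hind
      have hind' : indK (fun k => relH H i k) ∈ stabS E := by rw [hH_def]; exact hind
      have hindc' : indK (fun k => ¬ relH H i k) ∈ stabS E := by rw [hH_def]; exact hindc
      have hcp : Fintype.card {k // relH H i k} < Fintype.card ι := Fintype.card_subtype_lt hpj
      have hcn : Fintype.card {k // ¬ relH H i k} < Fintype.card ι :=
        Fintype.card_subtype_lt (x := i) (not_not_intro hpi)
      -- nonzero restricted modules
      obtain ⟨ci, hciC, hcii⟩ := hsupC i
      obtain ⟨di, hdiD, hdii⟩ := hsupD i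
      obtain ⟨cj, hcjC, hcjj⟩ := hsupC j
      obtain ⟨dj, hdjD, hdjj⟩ := hsupD j
      have IH1 := IH_small {k // relH H i k} hcp (C.map (resL (fun k => relH H i k)))
        (D.map (resL (fun k => relH H i k)))
        (map_resL_ne_bot hciC hcii hpi) (map_resL_ne_bot hdiD hdii hpi)
      have IH2 := IH_small {k // ¬ relH H i k} hcn (C.map (resL (fun k => ¬ relH H i k)))
        (D.map (resL (fun k => ¬ relH H i k)))
        (map_resL_ne_bot hcjC hcjj hpj) (map_resL_ne_bot hdjD hdjj hpj)
      rw [← mulSpan_map (fun k => relH H i k) C D, hE_def] at IH1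
      rw [← mulSpan_map (fun k => ¬ relH H i k) C D, hE_def] at IH2
      have hCsplit : Module.finrank K C
          ≤ Module.finrank K (C.map (resL (fun k => relH H i k)))
          + Module.finrank K (C.map (resL (fun k => ¬ relH H i k))) :=
        finrank_le_res_add_res (fun k => relH H i k) C
      have hDsplit : Module.finrank K D
          ≤ Module.finrank K (D.map (resL (fun k => relH H i k)))
          + Module.finrank K (D.map (resL (fun k => ¬ relH H i k))) :=
        finrank_le_res_add_res (fun k => relH H i k) D
      have hEmerge : Module.finrank K (E.map (resL (fun k => relH H i k)))
          + Module.finrank K (E.map (resL (fun k => ¬ relH H i k)))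
          ≤ Module.finrank K E :=
        res_add_res_le_finrank (fun k => relH H i k) E hindc'
      have hstab : Module.finrank K (stabS (E.map (resL (fun k => relH H i k))))
          + Module.finrank K (stabS (E.map (resL (fun k => ¬ relH H i k))))
          ≤ Module.finrank K H := by
        have hs := stab_pieces_le (fun k => relH H i k) E hind' hindc'
        rw [hH_def] at hs
        exact hs
      omega
  · -- CASE 1 : support reduction
    obtain ⟨i₀, hi₀⟩ := (Set.ne_univ_iff_exists_notMem _).mp hsup
    have hκ : Fintype.card {i // i ∈ supS E} < Fintype.card ι := Fintype.card_subtype_lt hi₀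
    obtain ⟨e, heE, he0⟩ := exists_ne_zero_of_ne_bot hE
    obtain ⟨i₁, hi₁'⟩ := Function.ne_iff.mp he0
    have hi₁ : e i₁ ≠ 0 := by simpa using hi₁'
    have hi₁p : i₁ ∈ supS E := ⟨e, heE, hi₁⟩
    have hi₁pm : i₁ ∈ supS (mulSpan C D) := by rw [hE_def]; exact hi₁p
    obtain ⟨c₁, hc₁m, hc₁i⟩ := supS_mulSpan_left C D hi₁pm
    obtain ⟨d₁, hd₁m, hd₁i⟩ := supS_mulSpan_right C D hi₁pm
    have hC₀ : C.map (resL (fun i => i ∈ supS E)) ≠ ⊥ := map_resL_ne_bot hc₁m hc₁i hi₁p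
    have hD₀ : D.map (resL (fun i => i ∈ supS E)) ≠ ⊥ := map_resL_ne_bot hd₁m hd₁i hi₁p
    have IH := IH_small {i // i ∈ supS E} hκ (C.map (resL (fun i => i ∈ supS E)))
      (D.map (resL (fun i => i ∈ supS E))) hC₀ hD₀
    rw [← mulSpan_map (fun i => i ∈ supS E) C D, hE_def] at IH
    -- (ii) finrank (E.map (resL p)) = finrank E
    have hEinf : E ⊓ LinearMap.ker (resL (K := K) (fun i => i ∈ supS E)) = ⊥ := by
      rw [Submodule.eq_bot_iff]
      rintro x ⟨hxE, hxk⟩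
      funext i
      by_cases hi : i ∈ supS E
      · have := congrFun (LinearMap.mem_ker.mp hxk) ⟨i, hi⟩
        simpa using this
      · exact not_mem_supS hi x hxE
    have hEeq : Module.finrank K (E.map (resL (fun i => i ∈ supS E))) = Module.finrank K E := by
      have := finrank_map_add_finrank_inf_ker E (resL (K := K) (fun i => i ∈ supS E))
      rw [hEinf] at this
      simpa using this
    -- (i) rank decompositions of C and D
    have hCdec := finrank_map_add_finrank_inf_ker C (resL (K := K) (fun i => i ∈ supS E))
    have hDdec := finrank_map_add_finrank_inf_ker D (resL (K := K) (fun i => i ∈ supS E))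
    -- (iii) kernels have small disjoint supports
    have hKCsupp : ∀ i ∈ supS (C ⊓ LinearMap.ker (resL (K := K) (fun i => i ∈ supS E))),
        ¬ (i ∈ supS E) := by
      rintro i ⟨v, ⟨hvC, hvk⟩, hvi⟩ hip
      have := congrFun (LinearMap.mem_ker.mp hvk) ⟨i, hip⟩
      exact hvi (by simpa using this)
    have hKDsupp : ∀ i ∈ supS (D ⊓ LinearMap.ker (resL (K := K) (fun i => i ∈ supS E))),
        ¬ (i ∈ supS E) := by
      rintro i ⟨v, ⟨hvD, hvk⟩, hvi⟩ hip
      have := congrFun (LinearMap.mem_ker.mp hvk) ⟨i, hip⟩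
      exact hvi (by simpa using this)
    have hdisj : ∀ i, i ∈ supS (C ⊓ LinearMap.ker (resL (K := K) (fun i => i ∈ supS E))) →
        i ∈ supS (D ⊓ LinearMap.ker (resL (K := K) (fun i => i ∈ supS E))) → False := by
      rintro i ⟨v, ⟨hvC, hvk⟩, hvi⟩ ⟨w, ⟨hwD, _⟩, hwi⟩
      have hvw : v * w ∈ E := by rw [← hE_def]; exact mul_mem_mulSpan hvC hwD
      have hip : i ∈ supS E := ⟨v * w, hvw, by
        simp only [Pi.mul_apply]
        exact mul_ne_zero hvi hwi⟩
      exact hKCsupp i ⟨v, ⟨hvC, hvk⟩, hvi⟩ hip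
    have hKC : Module.finrank K
        (C ⊓ LinearMap.ker (resL (K := K) (fun i => i ∈ supS E)) : Submodule K (ι → K))
        ≤ Nat.card {i // i ∈ supS (C ⊓ LinearMap.ker (resL (K := K) (fun i => i ∈ supS E)))} :=
      finrank_le_card_of_supported _ _ (fun v hv i hi => not_mem_supS hi v hv)
    have hKD : Module.finrank K
        (D ⊓ LinearMap.ker (resL (K := K) (fun i => i ∈ supS E)) : Submodule K (ι → K))
        ≤ Nat.card {i // i ∈ supS (D ⊓ LinearMap.ker (resL (K := K) (fun i => i ∈ supS E)))} :=
      finrank_le_card_of_supported _ _ (fun v hv i hi => not_mem_supS hi v hv)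
    have hcardsum : Nat.card {i // i ∈ supS (C ⊓ LinearMap.ker (resL (K := K) (fun i => i ∈ supS E)))}
        + Nat.card {i // i ∈ supS (D ⊓ LinearMap.ker (resL (K := K) (fun i => i ∈ supS E)))}
        ≤ Nat.card {i // ¬ (i ∈ supS E)} := by
      classical
      rw [Nat.card_eq_fintype_card, Nat.card_eq_fintype_card, Nat.card_eq_fintype_card]
      rw [Fintype.card_subtype, Fintype.card_subtype, Fintype.card_subtype]
      rw [← Finset.card_union_of_disjoint]
      · apply Finset.card_le_card
        intro i hi
        rw [Finset.mem_union, Finset.mem_filter, Finset.mem_filter] at hi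
        rw [Finset.mem_filter]
        rcases hi with ⟨_, h⟩ | ⟨_, h⟩
        · exact ⟨Finset.mem_univ i, hKCsupp i h⟩
        · exact ⟨Finset.mem_univ i, hKDsupp i h⟩
      · rw [Finset.disjoint_filter]
        intro i _ h1 h2
        exact hdisj i h1 h2
    -- (iv) stabilizer of E contains extension piece plus kernel piece
    have hpE : indK (fun i => i ∈ supS E) ∈ stabS E := by
      intro e' he'
      have heq : indK (K := K) (fun i => i ∈ supS E) * e' = e' := by
        funext i
        by_cases hi : i ∈ supS E
        · show indK (fun i => i ∈ supS E) i * e' i = e' i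
          simp [indK, hi]
        · show indK (fun i => i ∈ supS E) i * e' i = e' i
          rw [not_mem_supS hi e' he']
          simp
      rw [heq]; exact he'
    have hkerH : LinearMap.ker (resL (K := K) (fun i => i ∈ supS E)) ≤ stabS E := by
      intro x hx
      intro e' he'
      have heq : x * e' = 0 := by
        funext i
        by_cases hi : i ∈ supS E
        · have h0 : x i = 0 := by simpa using congrFun (LinearMap.mem_ker.mp hx) ⟨i, hi⟩
          show x i * e' i = 0
          rw [h0, zero_mul]
        · show x i * e' i = 0
          rw [not_mem_supS hi e' he', mul_zero]
      rw [heq]; exact E.zero_mem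
    have hXle : (stabS (E.map (resL (fun i => i ∈ supS E)))).map (extL (fun i => i ∈ supS E))
        ≤ stabS E := by
      rintro _ ⟨x, hx, rfl⟩
      exact extL_stab_mem hpE hx
    have hXker : ((stabS (E.map (resL (fun i => i ∈ supS E)))).map (extL (fun i => i ∈ supS E)))
        ⊓ LinearMap.ker (resL (K := K) (fun i => i ∈ supS E)) = ⊥ := by
      rw [Submodule.eq_bot_iff]
      rintro _ ⟨⟨x, _, rfl⟩, hk⟩
      have : resL (K := K) (fun i => i ∈ supS E) (extL (fun i => i ∈ supS E) x) = 0 :=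
        LinearMap.mem_ker.mp hk
      rw [resL_extL] at this
      rw [this]
      exact map_zero _
    have hfrX : Module.finrank K
        ((stabS (E.map (resL (fun i => i ∈ supS E)))).map (extL (fun i => i ∈ supS E)))
        = Module.finrank K (stabS (E.map (resL (fun i => i ∈ supS E)))) :=
      (Submodule.equivMapOfInjective _ (extL_injective _) _).finrank_eq.symm
    have hfrker : Module.finrank K (LinearMap.ker (resL (K := K) (fun i => i ∈ supS E)))
        = Nat.card {i // ¬ (i ∈ supS E)} := finrank_ker_resL _
    have hsupH := Submodule.finrank_sup_add_finrank_inf_eq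
      ((stabS (E.map (resL (fun i => i ∈ supS E)))).map (extL (fun i => i ∈ supS E)))
      (LinearMap.ker (resL (K := K) (fun i => i ∈ supS E)))
    rw [hXker] at hsupH
    have hsupHle : Module.finrank K
        (((stabS (E.map (resL (fun i => i ∈ supS E)))).map (extL (fun i => i ∈ supS E)))
          ⊔ LinearMap.ker (resL (K := K) (fun i => i ∈ supS E)) : Submodule K (ι → K))
        ≤ Module.finrank K H := by
      rw [← hH_def]
      exact Submodule.finrank_mono (sup_le hXle hkerH)
    simp only [finrank_bot, add_zero] at hsupH
    omega

end MainProof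


theorem statement4' (K : Type*) [Field K] (n : ℕ) (C D : Submodule K (Fin n → K))
    (hC : C ≠ ⊥) (hD : D ≠ ⊥) :
    Module.finrank K ↥C + Module.finrank K ↥D ≤
      Module.finrank K ↥(schurMul C D) + Module.finrank K ↥(stab (schurMul C D)) := by
  have hms : schurMul C D = mulSpan C D := rfl
  have hst : stab (mulSpan C D) = stabS (mulSpan C D) := rfl
  rw [hms, hst]
  exact main_aux _ (Fin n) C D le_rfl hC hD

/-- Kneser's theorem for codes:
`dim (C*D) ≥ dim C + dim D − dim St(C*D)` for nonzero subspaces `C, D ⊆ K^n`. -/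
theorem statement4 (K : Type*) [Field K] (n : ℕ) (C D : Submodule K (Fin n → K))
    (hC : C ≠ ⊥) (hD : D ≠ ⊥) :
    Module.finrank K ↥C + Module.finrank K ↥D ≤
      Module.finrank K ↥(schurMul C D) + Module.finrank K ↥(stab (schurMul C D)) := by
  exact statement4' K n C D hC hD
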